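/- Let X be a finite set, E*₀,...,E*_D, A, L, R, A* = ∑ θ*ᵢ E*ᵢ as above, and suppose real scalars β, ϱ satisfy the relation [A, A²A* − β A A* A + A* A² − ϱ A*] = 0 (commutator), the θ*ᵢ are mutually distinct, and θ*_{i−1} ≠ θ*ᵢ for all i. Then for each 1 ≤ i ≤ D the identity ((θ*ᵢ − θ*_{i−1} + (β+1)(θ*_{i−2} − θ*_{i−1}))/(θ*ᵢ − θ*_{i−1})) RL² + (β+2) LRL + ((θ*ᵢ − θ*_{i−1} + (β+1)(θ*ᵢ − θ*_{i+1}))/(θ*ᵢ − θ*_{i−1})) L²R = ϱ L holds on E*ᵢ V, where θ*_{−1}, θ*_{D+1} are arbitrary. -/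

import Mathlib

theorem stmt_14 {X : Type*} [Fintype X] [DecidableEq X]
    (D : ℕ) (hD : 3 ≤ D)
    (E : ℤ → Matrix X X ℝ)
    (hEout : ∀ j : ℤ, j < 0 ∨ (D : ℤ) < j → E j = 0)
    (hEdiag : ∀ j, (E j).IsDiag)
    (hE01 : ∀ j (x : X), E j x x = 0 ∨ E j x x = 1)
    (hEsum : ∑ j ∈ Finset.Icc (0 : ℤ) D, E j = 1)
    (hEorth : ∀ i j : ℤ, E i * E j = if i = j then E i else 0)
    (A : Matrix X X ℝ)
    (hA : ∀ i h : ℤ, |i - h| ≠ 1 → E i * A * E h = 0)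
    (L R : Matrix X X ℝ)
    (hL : L = ∑ i ∈ Finset.Icc (1 : ℤ) D, E (i - 1) * A * E i)
    (hR : R = ∑ i ∈ Finset.Icc (0 : ℤ) (D - 1), E (i + 1) * A * E i)
    (θs : ℤ → ℝ) (As : Matrix X X ℝ)
    (hAs : As = ∑ i ∈ Finset.Icc (0 : ℤ) D, θs i • E i)
    (β ϱ : ℝ)
    (hdist : ∀ i j : ℤ, 0 ≤ i → i ≤ D → 0 ≤ j → j ≤ D → i ≠ j → θs i ≠ θs j)
    (hrel : A * (A ^ 2 * As - β • (A * As * A) + As * A ^ 2 - ϱ • As)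
          = (A ^ 2 * As - β • (A * As * A) + As * A ^ 2 - ϱ • As) * A) :
    ∀ i : ℤ, 1 ≤ i → i ≤ D →
      (((θs i - θs (i - 1) + (β + 1) * (θs (i - 2) - θs (i - 1))) / (θs i - θs (i - 1))) •
          (R * L ^ 2) +
        (β + 2) • (L * R * L) +
        ((θs i - θs (i - 1) + (β + 1) * (θs i - θs (i + 1))) / (θs i - θs (i - 1))) •
          (L ^ 2 * R)) * E i = (ϱ • L) * E i := by
  have habs : ∀ a b : ℤ, b ≠ a - 1 → b ≠ a + 1 → E a * A * E b = 0 := by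
    intro a b h1 h2
    refine hA a b ?_
    rcases abs_cases (a - b) with ⟨h3, _⟩ | ⟨h3, _⟩ <;> omega
  have hAE : ∀ j : ℤ, A * E j = E (j - 1) * (A * E j) + E (j + 1) * (A * E j) := by
    intro j
    have h0 : A * E j = ∑ k ∈ Finset.Icc (0 : ℤ) D, E k * (A * E j) := by
      rw [← Finset.sum_mul, hEsum, one_mul]
    have h1 : ∑ k ∈ Finset.Icc (0 : ℤ) D, E k * (A * E j)
        = ∑ k ∈ Finset.Icc (0 : ℤ) D ∪ {j - 1, j + 1}, E k * (A * E j) := by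
      refine Finset.sum_subset Finset.subset_union_left ?_
      intro x hx hnx
      have hb : x < 0 ∨ (D : ℤ) < x := by
        rw [Finset.mem_Icc] at hnx; omega
      rw [hEout x hb, zero_mul]
    have h2 : ∑ k ∈ Finset.Icc (0 : ℤ) D ∪ {j - 1, j + 1}, E k * (A * E j)
        = ∑ k ∈ ({j - 1, j + 1} : Finset ℤ), E k * (A * E j) := by
      refine (Finset.sum_subset Finset.subset_union_right ?_).symm
      intro x hx hnx
      simp only [Finset.mem_insert, Finset.mem_singleton, not_or] at hnx
      rw [← mul_assoc, habs x j (by omega) (by omega)]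
    conv_lhs => rw [h0, h1, h2, Finset.sum_pair (by omega : j - 1 ≠ j + 1)]
  have hAsE : ∀ j : ℤ, As * E j = θs j • E j := by
    intro j
    by_cases hj : j ∈ Finset.Icc (0 : ℤ) D
    · rw [hAs, Finset.sum_mul, Finset.sum_eq_single j
        (fun k _ hkj => by rw [smul_mul_assoc, hEorth, if_neg hkj, smul_zero])
        (fun h => absurd hj h)]
      rw [smul_mul_assoc, hEorth, if_pos rfl]
    · have hz : E j = 0 := hEout j (by rw [Finset.mem_Icc] at hj; omega)
      simp [hz]
  have hEAs : ∀ j : ℤ, E j * As = θs j • E j := by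
    intro j
    by_cases hj : j ∈ Finset.Icc (0 : ℤ) D
    · rw [hAs, Finset.mul_sum, Finset.sum_eq_single j
        (fun k _ hkj => by rw [mul_smul_comm, hEorth, if_neg (Ne.symm hkj), smul_zero])
        (fun h => absurd hj h)]
      rw [mul_smul_comm, hEorth, if_pos rfl]
    · have hz : E j = 0 := hEout j (by rw [Finset.mem_Icc] at hj; omega)
      simp [hz]
  have hLE : ∀ j : ℤ, L * E j = E (j - 1) * (A * E j) := by
    intro j
    by_cases hj : j ∈ Finset.Icc (1 : ℤ) D
    · rw [hL, Finset.sum_mul, Finset.sum_eq_single j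
        (fun k _ hkj => by rw [mul_assoc, hEorth, if_neg hkj, mul_zero])
        (fun h => absurd hj h), mul_assoc, mul_assoc, hEorth, if_pos rfl]
    · rw [Finset.mem_Icc] at hj
      have hsum : L * E j = 0 := by
        rw [hL, Finset.sum_mul]
        refine Finset.sum_eq_zero fun k hk => ?_
        rw [Finset.mem_Icc] at hk
        rw [mul_assoc, hEorth, if_neg (by omega), mul_zero]
      rcases (by omega : j ≤ 0 ∨ (D : ℤ) < j) with h | h
      · rcases (by omega : j < 0 ∨ j = 0) with h' | h'
        · rw [hsum, hEout j (Or.inl h')]; simp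
        · subst h'; rw [hsum, hEout (0 - 1 : ℤ) (Or.inl (by norm_num)), zero_mul]
      · rw [hsum, hEout j (Or.inr h)]; simp
  have hRE : ∀ j : ℤ, R * E j = E (j + 1) * (A * E j) := by
    intro j
    by_cases hj : j ∈ Finset.Icc (0 : ℤ) (D - 1)
    · rw [hR, Finset.sum_mul, Finset.sum_eq_single j
        (fun k _ hkj => by rw [mul_assoc, hEorth, if_neg hkj, mul_zero])
        (fun h => absurd hj h), mul_assoc, mul_assoc, hEorth, if_pos rfl]
    · rw [Finset.mem_Icc] at hj
      have hsum : R * E j = 0 := by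
        rw [hR, Finset.sum_mul]
        refine Finset.sum_eq_zero fun k hk => ?_
        rw [Finset.mem_Icc] at hk
        rw [mul_assoc, hEorth, if_neg (by omega), mul_zero]
      rcases (by omega : j < 0 ∨ (D : ℤ) ≤ j) with h | h
      · rw [hsum, hEout j (Or.inl h)]; simp
      · rcases (by omega : (D : ℤ) < j ∨ j = D) with h' | h'
        · rw [hsum, hEout j (Or.inr h')]; simp
        · subst h'; rw [hsum, hEout ((D : ℤ) + 1) (Or.inr (by omega)), zero_mul]
  have Astep : ∀ (a : ℤ) (W : Matrix X X ℝ), A * (E a * W)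
      = E (a - 1) * (A * (E a * W)) + E (a + 1) * (A * (E a * W)) := by
    intro a W
    calc A * (E a * W) = (A * E a) * W := by rw [mul_assoc]
      _ = (E (a - 1) * (A * E a) + E (a + 1) * (A * E a)) * W := by
            conv_lhs => rw [hAE a]
      _ = _ := by simp only [add_mul, mul_assoc]
  have Asstep : ∀ (a : ℤ) (W : Matrix X X ℝ), As * (E a * W) = θs a • (E a * W) := by
    intro a W; rw [← mul_assoc, hAsE, smul_mul_assoc]
  have AsstepL : ∀ (a : ℤ) (W : Matrix X X ℝ), E a * (As * W) = θs a • (E a * W) := by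
    intro a W; rw [← mul_assoc, hEAs, smul_mul_assoc]
  have Lstep : ∀ (a : ℤ) (W : Matrix X X ℝ), L * (E a * W) = E (a - 1) * (A * (E a * W)) := by
    intro a W; rw [← mul_assoc, hLE]; simp only [mul_assoc]
  have Rstep : ∀ (a : ℤ) (W : Matrix X X ℝ), R * (E a * W) = E (a + 1) * (A * (E a * W)) := by
    intro a W; rw [← mul_assoc, hRE]; simp only [mul_assoc]
  have Avan : ∀ (a b : ℤ) (W : Matrix X X ℝ), b ≠ a - 1 → b ≠ a + 1 →
      E a * (A * (E b * W)) = 0 := by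
    intro a b W h1 h2
    calc E a * (A * (E b * W)) = (E a * A * E b) * W := by simp only [mul_assoc]
      _ = 0 := by rw [habs a b h1 h2, zero_mul]
  intro i hi1 hiD
  have n1 : i - 1 - 1 = i - 2 := by ring
  have n2 : i - 1 + 1 = i := by ring
  have n3 : i + 1 - 1 = i := by ring
  have n4 : i + 1 + 1 = i + 2 := by ring
  have n5 : i - 2 + 1 = i - 1 := by ring
  have q2 : A * (A * E i) =
      E (i - 2) * (A * (E (i - 1) * (A * E i))) + E i * (A * (E (i - 1) * (A * E i)))
      + (E i * (A * (E (i + 1) * (A * E i))) + E (i + 2) * (A * (E (i + 1) * (A * E i)))) := by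
    conv_lhs => rw [hAE i, mul_add, Astep (i - 1) (A * E i), Astep (i + 1) (A * E i)]
    rw [n1, n2, n3, n4]
  have m1 : E (i - 1) * (A * (A * (A * E i))) =
      E (i - 1) * (A * (E (i - 2) * (A * (E (i - 1) * (A * E i)))))
      + E (i - 1) * (A * (E i * (A * (E (i - 1) * (A * E i)))))
      + E (i - 1) * (A * (E i * (A * (E (i + 1) * (A * E i))))) := by
    conv_lhs => rw [q2]
    simp only [mul_add]
    rw [Avan (i - 1) (i + 2) _ (by omega) (by omega), add_zero]
  have inner2 : As * (A * E i) =
      θs (i - 1) • (E (i - 1) * (A * E i)) + θs (i + 1) • (E (i + 1) * (A * E i)) := by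
    conv_lhs => rw [hAE i, mul_add, Asstep (i - 1) (A * E i), Asstep (i + 1) (A * E i)]
  have m2 : E (i - 1) * (A * (A * (As * (A * E i)))) =
      θs (i - 1) • (E (i - 1) * (A * (E (i - 2) * (A * (E (i - 1) * (A * E i))))))
      + θs (i - 1) • (E (i - 1) * (A * (E i * (A * (E (i - 1) * (A * E i))))))
      + θs (i + 1) • (E (i - 1) * (A * (E i * (A * (E (i + 1) * (A * E i)))))) := by
    conv_lhs =>
      rw [inner2]
      simp only [mul_add, mul_smul_comm]
      rw [Astep (i - 1) (A * E i), Astep (i + 1) (A * E i)]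
      rw [n1, n2, n3, n4]
      simp only [mul_add, mul_smul_comm]
    rw [Avan (i - 1) (i + 2) _ (by omega) (by omega)]
    simp only [smul_add, add_zero]
  have m3 : E (i - 1) * (A * (As * (A * (A * E i)))) =
      θs (i - 2) • (E (i - 1) * (A * (E (i - 2) * (A * (E (i - 1) * (A * E i))))))
      + θs i • (E (i - 1) * (A * (E i * (A * (E (i - 1) * (A * E i))))))
      + θs i • (E (i - 1) * (A * (E i * (A * (E (i + 1) * (A * E i)))))) := by
    conv_lhs =>
      rw [q2]
      simp only [mul_add]
      rw [Asstep (i - 2) (A * (E (i - 1) * (A * E i))),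
          Asstep i (A * (E (i - 1) * (A * E i))),
          Asstep i (A * (E (i + 1) * (A * E i))),
          Asstep (i + 2) (A * (E (i + 1) * (A * E i)))]
      simp only [mul_smul_comm]
    rw [Avan (i - 1) (i + 2) _ (by omega) (by omega), smul_zero, add_zero]
  have m1' : E (i - 1) * (A * (A * (A * (As * E i)))) =
      θs i • (E (i - 1) * (A * (E (i - 2) * (A * (E (i - 1) * (A * E i)))))
      + E (i - 1) * (A * (E i * (A * (E (i - 1) * (A * E i)))))
      + E (i - 1) * (A * (E i * (A * (E (i + 1) * (A * E i)))))) := by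
    conv_lhs =>
      rw [hAsE i]
      simp only [mul_smul_comm]
    rw [m1]
  have m5 : E (i - 1) * (As * (A * (A * (A * E i)))) =
      θs (i - 1) • (E (i - 1) * (A * (E (i - 2) * (A * (E (i - 1) * (A * E i)))))
      + E (i - 1) * (A * (E i * (A * (E (i - 1) * (A * E i)))))
      + E (i - 1) * (A * (E i * (A * (E (i + 1) * (A * E i)))))) := by
    rw [AsstepL, m1]
  have m4 : E (i - 1) * (A * (As * E i)) = θs i • (E (i - 1) * (A * E i)) := by
    rw [hAsE i, mul_smul_comm, mul_smul_comm]
  have m6 : E (i - 1) * (As * (A * E i)) = θs (i - 1) • (E (i - 1) * (A * E i)) :=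
    AsstepL (i - 1) _
  -- sandwich the main relation
  have key := congrArg (fun M : Matrix X X ℝ => E (i - 1) * (M * E i)) hrel
  simp only [mul_sub, sub_mul, mul_add, add_mul, smul_mul_assoc, mul_smul_comm,
    mul_assoc, pow_two] at key
  rw [m1', m2, m3, m4, m5, m6] at key
  -- linear consequence
  have hvw : θs i - θs (i - 1) ≠ 0 :=
    sub_ne_zero.mpr (hdist i (i - 1) (by omega) (by exact_mod_cast hiD)
      (by omega) (by omega) (by omega))
  have key2 : (θs i - θs (i - 1) + (β + 1) * (θs (i - 2) - θs (i - 1))) •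
        (E (i - 1) * (A * (E (i - 2) * (A * (E (i - 1) * (A * E i))))))
      + ((β + 2) * (θs i - θs (i - 1))) •
        (E (i - 1) * (A * (E i * (A * (E (i - 1) * (A * E i))))))
      + (θs i - θs (i - 1) + (β + 1) * (θs i - θs (i + 1))) •
        (E (i - 1) * (A * (E i * (A * (E (i + 1) * (A * E i))))))
      = (ϱ * (θs i - θs (i - 1))) • (E (i - 1) * (A * E i)) := by
    linear_combination (norm := module) key
  -- reduce the goal to the T-atom form
  simp only [pow_two, add_mul, smul_mul_assoc, mul_assoc]
  rw [hLE i, hRE i]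
  rw [Lstep (i - 1) (A * E i), n1]
  rw [Rstep (i - 2) (A * (E (i - 1) * (A * E i))), n5]
  rw [Rstep (i - 1) (A * E i), n2]
  rw [Lstep i (A * (E (i - 1) * (A * E i)))]
  rw [Lstep (i + 1) (A * E i), n3]
  rw [Lstep i (A * (E (i + 1) * (A * E i)))]
  have key3 := congrArg (fun M : Matrix X X ℝ => (θs i - θs (i - 1))⁻¹ • M) key2
  simp only [smul_add, smul_smul] at key3
  rw [show (θs i - θs (i - 1))⁻¹ * ((β + 2) * (θs i - θs (i - 1))) = β + 2 by
        field_simp,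
      show (θs i - θs (i - 1))⁻¹ * (ϱ * (θs i - θs (i - 1))) = ϱ by
        field_simp] at key3
  linear_combination (norm := module) key3
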